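/- arXiv:1603.07428 — 3 statements merged into one kernel-verified Lean document; each statement's English description precedes it below -/
import Mathlib

section
/- Let N ≥ 5 be an integer and a, b, A > 0 real numbers. If ((N-4)·b·A/2)^(2/(N-2)) · ((N-2)/(N-4)) · a^((N-4)/(N-2)) > 1, then the equation a·s² + b·A·s^(4-N) = 1 has no solution s > 0. -/
theorem stmt_2 (N : ℕ) (hN : 5 ≤ N) (a b A : ℝ) (ha : 0 < a) (hb : 0 < b) (hA : 0 < A)
    (hthr : 1 < (((N : ℝ) - 4) * b * A / 2) ^ ((2 : ℝ) / ((N : ℝ) - 2)) *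
      (((N : ℝ) - 2) / ((N : ℝ) - 4)) * a ^ (((N : ℝ) - 4) / ((N : ℝ) - 2))) :
    ¬ ∃ s : ℝ, 0 < s ∧ a * s ^ 2 + b * A * s ^ ((4 : ℤ) - N) = 1 := by
  rintro ⟨s, hs, heq⟩
  have hn : (5:ℝ) ≤ (N:ℝ) := by exact_mod_cast hN
  set n : ℝ := (N:ℝ) with hn_def
  have h2 : (0:ℝ) < n - 2 := by linarith
  have h4 : (0:ℝ) < n - 4 := by linarith
  set w₁ : ℝ := (n-4)/(n-2) with hw₁def
  set w₂ : ℝ := 2/(n-2) with hw₂def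
  have hw : w₁ + w₂ = 1 := by rw [hw₁def, hw₂def]; field_simp; ring
  have hw₁ : 0 ≤ w₁ := by positivity
  have hw₂ : 0 ≤ w₂ := by positivity
  have hszpos : 0 < s ^ ((4:ℤ) - N) := zpow_pos hs _
  set p₁ : ℝ := a * s^2 * ((n-2)/(n-4)) with hp₁def
  set p₂ : ℝ := b * A * s ^ ((4:ℤ) - N) * ((n-2)/2) with hp₂def
  have hp₁ : 0 ≤ p₁ := by positivity
  have hp₂ : 0 ≤ p₂ := by positivity
  have key := Real.geom_mean_le_arith_mean2_weighted hw₁ hw₂ hp₁ hp₂ hw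
  have hsum : w₁ * p₁ + w₂ * p₂ = 1 := by
    rw [← heq, hp₁def, hp₂def, hw₁def, hw₂def]
    field_simp
  have hs2 : s ^ (2:ℕ) = s ^ (2:ℝ) := by
    rw [← Real.rpow_natCast s 2]; norm_num
  have hsz : s ^ ((4:ℤ) - N) = s ^ (4 - n) := by
    rw [← Real.rpow_intCast s ((4:ℤ) - (N:ℤ))]; congr 1; simp [hn_def]
  have hgeom : p₁ ^ w₁ * p₂ ^ w₂ =
      ((n-4)*b*A/2) ^ w₂ * ((n-2)/(n-4)) * a ^ w₁ := by
    have e₁ : p₁ = (a * ((n-2)/(n-4))) * s ^ (2:ℝ) := by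
      rw [hp₁def, ← hs2]; ring
    have e₂ : p₂ = (((n-4)*b*A/2) * ((n-2)/(n-4))) * s ^ (4-n) := by
      rw [hp₂def, hsz]; field_simp
    have c₁ : (0:ℝ) ≤ a * ((n-2)/(n-4)) := by positivity
    have c₂ : (0:ℝ) ≤ ((n-4)*b*A/2) * ((n-2)/(n-4)) := by positivity
    rw [e₁, e₂, Real.mul_rpow c₁ (Real.rpow_nonneg hs.le _),
        Real.mul_rpow c₂ (Real.rpow_nonneg hs.le _),
        Real.mul_rpow ha.le (by positivity : (0:ℝ) ≤ (n-2)/(n-4)),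
        Real.mul_rpow (by positivity : (0:ℝ) ≤ (n-4)*b*A/2)
          (by positivity : (0:ℝ) ≤ (n-2)/(n-4)),
        ← Real.rpow_mul hs.le, ← Real.rpow_mul hs.le]
    have hexp : 2 * w₁ + (4 - n) * w₂ = 0 := by
      rw [hw₁def, hw₂def]; field_simp; ring
    have hrp : s ^ (2 * w₁) * s ^ ((4 - n) * w₂) = 1 := by
      rw [← Real.rpow_add hs, hexp, Real.rpow_zero]
    have hcomb : ((n-2)/(n-4)) ^ w₁ * ((n-2)/(n-4)) ^ w₂ = (n-2)/(n-4) := by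
      rw [← Real.rpow_add (by positivity) , hw, Real.rpow_one]
    calc a ^ w₁ * ((n-2)/(n-4)) ^ w₁ * s ^ (2 * w₁) *
          (((n-4)*b*A/2) ^ w₂ * ((n-2)/(n-4)) ^ w₂ * s ^ ((4-n) * w₂))
        = ((n-4)*b*A/2) ^ w₂ * (((n-2)/(n-4)) ^ w₁ * ((n-2)/(n-4)) ^ w₂) * a ^ w₁ *
          (s ^ (2 * w₁) * s ^ ((4 - n) * w₂)) := by ring
      _ = ((n-4)*b*A/2) ^ w₂ * ((n-2)/(n-4)) * a ^ w₁ := by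
          rw [hrp, hcomb, mul_one]
  rw [hgeom, hsum] at key
  linarith
end

section
/- Let N ≥ 5, and suppose positive reals A, B, C, a, b, λ, p with 2 < p < 2N/(N-2) satisfy the Pohozaev constraint ((N-2)/(2N))·(a·A + b·A²) + (λ/2)·C - (1/p)·B = 0 together with the Sobolev-type bound B ≤ S^(-2*(p-2)/(2(2*-2)))·C^((2*-p)/(2*-2))·A^(2*(p-2)/(2(2*-2))) where 2* = 2N/(N-2) and S > 0. Then A ≥ (((N-2)·a·p/(2N))·((λp/2)^((2*-p)/(p-2)))·S^(2*/2))^(2/(2*-2)) and A ≤ ((2N/((N-2)·b·p))·((2/(λp))^((2*-p)/(p-2)))·S^(-2*/2))^(2/(4-2*)). -/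
set_option maxHeartbeats 1000000


theorem stmt_11 (N : ℕ) (hN : 5 ≤ N) (a b lam p S A B C : ℝ)
    (ha : 0 < a) (hb : 0 < b) (hlam : 0 < lam) (hS : 0 < S)
    (hA : 0 < A) (hB : 0 < B) (hC : 0 < C)
    (hp2 : 2 < p) (hpc : p < 2 * N / ((N : ℝ) - 2))
    (hPoh : (((N : ℝ) - 2) / (2 * N)) * (a * A + b * A ^ 2) + (lam / 2) * C - (1 / p) * B = 0)
    (hSob : B ≤ S ^ (-((2 * N / ((N : ℝ) - 2)) * (p - 2) / (2 * (2 * N / ((N : ℝ) - 2) - 2)))) *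
      C ^ ((2 * N / ((N : ℝ) - 2) - p) / (2 * N / ((N : ℝ) - 2) - 2)) *
      A ^ ((2 * N / ((N : ℝ) - 2)) * (p - 2) / (2 * (2 * N / ((N : ℝ) - 2) - 2)))) :
    ((((N : ℝ) - 2) * a * p / (2 * N) * (lam * p / 2) ^ ((2 * N / ((N : ℝ) - 2) - p) / (p - 2)) *
        S ^ ((2 * N / ((N : ℝ) - 2)) / 2)) ^ ((2 : ℝ) / (2 * N / ((N : ℝ) - 2) - 2)) ≤ A) ∧
    (A ≤ ((2 * N / (((N : ℝ) - 2) * b * p)) * ((2 / (lam * p)) ^ ((2 * N / ((N : ℝ) - 2) - p) / (p - 2))) *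
        S ^ (-((2 * N / ((N : ℝ) - 2)) / 2))) ^ ((2 : ℝ) / (4 - 2 * N / ((N : ℝ) - 2)))) := by
  have hN5 : (5:ℝ) ≤ (N:ℝ) := by exact_mod_cast hN
  set q : ℝ := 2 * (N:ℝ) / ((N:ℝ) - 2) with hqdef
  have hn2 : (0:ℝ) < (N:ℝ) - 2 := by linarith
  have hn0 : (0:ℝ) < (N:ℝ) := by linarith
  have hq2 : 2 < q := by rw [hqdef, lt_div_iff₀ hn2]; linarith
  have hq4 : q < 4 := by rw [hqdef, div_lt_iff₀ hn2]; linarith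
  have hp0 : (0:ℝ) < p := by linarith
  have hpq : p < q := hpc
  have hqm2 : (0:ℝ) < q - 2 := by linarith
  have hpm2 : (0:ℝ) < p - 2 := by linarith
  have h4q : (0:ℝ) < 4 - q := by linarith
  set θ : ℝ := q * (p - 2) / (2 * (q - 2)) with hθdef
  set σ : ℝ := (q - p) / (q - 2) with hσdef
  have hσ0 : 0 ≤ σ := div_nonneg (by linarith) hqm2.le
  -- extract the three inequalities from the Pohozaev identity
  have hPoh' : (((N:ℝ) - 2) / (2 * (N:ℝ))) * (a * A) + (((N:ℝ) - 2) / (2 * (N:ℝ))) * (b * A ^ 2)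
      + (lam / 2) * C - (1 / p) * B = 0 := by linear_combination hPoh
  have hc0 : (0:ℝ) < ((N:ℝ) - 2) / (2 * (N:ℝ)) := div_pos hn2 (by linarith)
  have haA : (((N:ℝ) - 2) / (2 * (N:ℝ))) * (a * A) ≤ (1 / p) * B := by
    nlinarith [mul_pos hc0 (mul_pos hb (pow_pos hA 2)), mul_pos (half_pos hlam) hC]
  have hbA : (((N:ℝ) - 2) / (2 * (N:ℝ))) * (b * A ^ 2) ≤ (1 / p) * B := by
    nlinarith [mul_pos hc0 (mul_pos ha hA), mul_pos (half_pos hlam) hC]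
  have hCB : C ≤ 2 / (lam * p) * B := by
    have hCp' : lam / 2 * C ≤ 1 / p * B := by
      nlinarith [mul_pos hc0 (mul_pos ha hA), mul_pos hc0 (mul_pos hb (pow_pos hA 2))]
    have h' := mul_le_mul_of_nonneg_left hCp' hp0.le
    have hpB : p * (1 / p * B) = B := by field_simp
    rw [hpB] at h'
    rw [div_mul_eq_mul_div, le_div_iff₀ (by positivity)]
    nlinarith [h']
  -- combine with the Sobolev bound
  have hlp : (0:ℝ) < 2 / (lam * p) := by positivity
  have hstep : C ^ σ ≤ (2 / (lam * p) * B) ^ σ := Real.rpow_le_rpow hC.le hCB hσ0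
  have h2 : B ≤ S ^ (-θ) * ((2 / (lam * p)) ^ σ * B ^ σ) * A ^ θ := by
    refine hSob.trans ?_
    rw [← Real.mul_rpow hlp.le hB.le]
    exact mul_le_mul_of_nonneg_right
      (mul_le_mul_of_nonneg_left hstep (Real.rpow_nonneg hS.le _))
      (Real.rpow_nonneg hA.le _)
  have key1 : B ^ (1 - σ) ≤ S ^ (-θ) * (2 / (lam * p)) ^ σ * A ^ θ := by
    rw [Real.rpow_sub hB, Real.rpow_one, div_le_iff₀ (Real.rpow_pos_of_pos hB σ)]
    exact h2.trans_eq (by ring)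
  set u : ℝ := (2 / (lam * p)) ^ ((q - p) / (p - 2)) with hudef
  set v : ℝ := S ^ (-(q / 2)) with hvdef
  have hu : (0:ℝ) < u := Real.rpow_pos_of_pos hlp _
  have hv : (0:ℝ) < v := Real.rpow_pos_of_pos hS _
  set r : ℝ := (q - 2) / (p - 2) with hrdef
  have hr0 : (0:ℝ) ≤ r := div_nonneg hqm2.le hpm2.le
  have key2 : B ≤ u * v * A ^ (q / 2) := by
    have h3 := Real.rpow_le_rpow (Real.rpow_nonneg hB.le _) key1 hr0
    have hL : (B ^ (1 - σ)) ^ r = B := by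
      rw [← Real.rpow_mul hB.le, show (1 - σ) * r = 1 by
        rw [hσdef, hrdef]; field_simp; ring, Real.rpow_one]
    have hR : (S ^ (-θ) * (2 / (lam * p)) ^ σ * A ^ θ) ^ r = v * u * A ^ (q / 2) := by
      rw [Real.mul_rpow (by positivity) (Real.rpow_nonneg hA.le _),
        Real.mul_rpow (Real.rpow_nonneg hS.le _) (Real.rpow_nonneg hlp.le _),
        ← Real.rpow_mul hS.le, ← Real.rpow_mul hlp.le, ← Real.rpow_mul hA.le,
        show -θ * r = -(q / 2) by rw [hθdef, hrdef]; field_simp,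
        show σ * r = (q - p) / (p - 2) by rw [hσdef, hrdef]; field_simp,
        show θ * r = q / 2 by rw [hθdef, hrdef]; field_simp]
    rw [hL, hR] at h3
    exact h3.trans_eq (by ring)
  constructor
  · -- lower bound
    have H2 : ((N:ℝ) - 2) * a * p / (2 * (N:ℝ)) * A ≤ u * v * A ^ (q / 2) := by
      have h := haA.trans (mul_le_mul_of_nonneg_left key2 (by positivity : (0:ℝ) ≤ 1 / p))
      have h' := mul_le_mul_of_nonneg_left h hp0.le
      calc ((N:ℝ) - 2) * a * p / (2 * (N:ℝ)) * A
          = p * ((((N:ℝ) - 2) / (2 * (N:ℝ))) * (a * A)) := by ring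
        _ ≤ p * ((1 / p) * (u * v * A ^ (q / 2))) := h'
        _ = u * v * A ^ (q / 2) := by field_simp
    have hue : (lam * p / 2) ^ ((q - p) / (p - 2)) = u⁻¹ := by
      rw [hudef, ← Real.inv_rpow hlp.le]
      congr 1
      field_simp
    have hve : S ^ (q / 2) = v⁻¹ := by
      rw [hvdef, Real.rpow_neg hS.le, inv_inv]
    have hLA : ((N:ℝ) - 2) * a * p / (2 * (N:ℝ)) * (lam * p / 2) ^ ((q - p) / (p - 2)) *
        S ^ (q / 2) ≤ A ^ ((q - 2) / 2) := by
      rw [show (q - 2) / 2 = q / 2 - 1 by ring, Real.rpow_sub hA, Real.rpow_one,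
        le_div_iff₀ hA, hue, hve]
      calc ((N:ℝ) - 2) * a * p / (2 * (N:ℝ)) * u⁻¹ * v⁻¹ * A
          = (((N:ℝ) - 2) * a * p / (2 * (N:ℝ)) * A) * (u⁻¹ * v⁻¹) := by ring
        _ ≤ (u * v * A ^ (q / 2)) * (u⁻¹ * v⁻¹) :=
            mul_le_mul_of_nonneg_right H2 (by positivity)
        _ = A ^ (q / 2) := by field_simp
    have hL0 : (0:ℝ) ≤ ((N:ℝ) - 2) * a * p / (2 * (N:ℝ)) * (lam * p / 2) ^ ((q - p) / (p - 2)) *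
        S ^ (q / 2) := by positivity
    have hfin := Real.rpow_le_rpow hL0 hLA (by positivity : (0:ℝ) ≤ 2 / (q - 2))
    rwa [← Real.rpow_mul hA.le, show (q - 2) / 2 * (2 / (q - 2)) = 1 by
      field_simp, Real.rpow_one] at hfin
  · -- upper bound
    have H3 : ((N:ℝ) - 2) * b * p / (2 * (N:ℝ)) * A ^ 2 ≤ u * v * A ^ (q / 2) := by
      have h := hbA.trans (mul_le_mul_of_nonneg_left key2 (by positivity : (0:ℝ) ≤ 1 / p))
      have h' := mul_le_mul_of_nonneg_left h hp0.le
      calc ((N:ℝ) - 2) * b * p / (2 * (N:ℝ)) * A ^ 2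
          = p * ((((N:ℝ) - 2) / (2 * (N:ℝ))) * (b * A ^ 2)) := by ring
        _ ≤ p * ((1 / p) * (u * v * A ^ (q / 2))) := h'
        _ = u * v * A ^ (q / 2) := by field_simp
    have hA2 : A ^ ((2:ℝ)) = A ^ 2 := by
      rw [show (2:ℝ) = ((2:ℕ):ℝ) by norm_num, Real.rpow_natCast]
    have hd : (0:ℝ) < 2 * (N:ℝ) / (((N:ℝ) - 2) * b * p) := by positivity
    have hAM : A ^ ((4 - q) / 2) ≤ 2 * (N:ℝ) / (((N:ℝ) - 2) * b * p) * u * v := by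
      rw [show (4 - q) / 2 = 2 - q / 2 by ring, Real.rpow_sub hA, hA2,
        div_le_iff₀ (Real.rpow_pos_of_pos hA _)]
      have h' := mul_le_mul_of_nonneg_left H3 hd.le
      calc A ^ 2
          = 2 * (N:ℝ) / (((N:ℝ) - 2) * b * p) *
            (((N:ℝ) - 2) * b * p / (2 * (N:ℝ)) * A ^ 2) := by
            field_simp
        _ ≤ 2 * (N:ℝ) / (((N:ℝ) - 2) * b * p) * (u * v * A ^ (q / 2)) := h'
        _ = 2 * (N:ℝ) / (((N:ℝ) - 2) * b * p) * u * v * A ^ (q / 2) := by ring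
    have hfin := Real.rpow_le_rpow (Real.rpow_nonneg hA.le _) hAM
      (by positivity : (0:ℝ) ≤ 2 / (4 - q))
    rwa [← Real.rpow_mul hA.le, show (4 - q) / 2 * (2 / (4 - q)) = 1 by
      field_simp, Real.rpow_one] at hfin
end

section
/- Let N ≥ 5 and a, b, A > 0 with ((N-4)·b·A/2)^(2/(N-2)) · ((N-2)/(N-4)) · a^((N-4)/(N-2)) = 1. Then s₀ = ((N-4)·b·A/(2a))^(1/(N-2)) is the unique positive solution of a·s² + b·A·s^(4-N) = 1, and moreover at s₀ one has 2a·s₀ = (N-4)·b·A·s₀^(3-N) (the derivative condition for a double root). -/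
lemma aux_one (k : ℕ) (t : ℝ) (ht : 0 < t)
    (heq : ((k:ℝ)+1) * t^(k+3) + 2 = ((k:ℝ)+3) * t^(k+1)) : t = 1 := by
  by_contra hne
  have hS : (t - 1) * ∑ i ∈ Finset.range (k+1), t^i = t^(k+1) - 1 := by
    rw [mul_comm]; exact geom_sum_mul t (k+1)
  have key : (t - 1) * (((k:ℝ)+1) * t^(k+2) + ((k:ℝ)+1) * t^(k+1)
      - 2 * ∑ i ∈ Finset.range (k+1), t^i) = 0 := by
    linear_combination heq - 2 * hS
  rcases lt_or_gt_of_ne hne with h1 | h1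
  · have hA : ((k:ℝ)+1) * t^(k+1) < ∑ i ∈ Finset.range (k+1), t^i := by
      have := Finset.sum_lt_sum_of_nonempty (s := Finset.range (k+1))
        (f := fun _ => t^(k+1)) (g := fun i => t^i)
        ⟨0, Finset.mem_range.2 (Nat.succ_pos k)⟩
        (fun i hi => pow_lt_pow_right_of_lt_one₀ ht h1 (Finset.mem_range.1 hi))
      simpa [Finset.sum_const, Finset.card_range, nsmul_eq_mul] using this
    have hB : ((k:ℝ)+1) * t^(k+2) < ∑ i ∈ Finset.range (k+1), t^i := by
      have := Finset.sum_lt_sum_of_nonempty (s := Finset.range (k+1))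
        (f := fun _ => t^(k+2)) (g := fun i => t^i)
        ⟨0, Finset.mem_range.2 (Nat.succ_pos k)⟩
        (fun i hi => pow_lt_pow_right_of_lt_one₀ ht h1
          (lt_trans (Finset.mem_range.1 hi) (Nat.lt_succ_self _)))
      simpa [Finset.sum_const, Finset.card_range, nsmul_eq_mul] using this
    have hbr : ((k:ℝ)+1) * t^(k+2) + ((k:ℝ)+1) * t^(k+1)
        - 2 * ∑ i ∈ Finset.range (k+1), t^i < 0 := by linarith
    exact absurd key (ne_of_gt (mul_pos_of_neg_of_neg (by linarith) hbr))
  · have hA : (∑ i ∈ Finset.range (k+1), t^i) < ((k:ℝ)+1) * t^(k+1) := by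
      have := Finset.sum_lt_sum_of_nonempty (s := Finset.range (k+1))
        (f := fun i => t^i) (g := fun _ => t^(k+1))
        ⟨0, Finset.mem_range.2 (Nat.succ_pos k)⟩
        (fun i hi => pow_lt_pow_right₀ h1 (Finset.mem_range.1 hi))
      simpa [Finset.sum_const, Finset.card_range, nsmul_eq_mul] using this
    have hB : (∑ i ∈ Finset.range (k+1), t^i) < ((k:ℝ)+1) * t^(k+2) := by
      have := Finset.sum_lt_sum_of_nonempty (s := Finset.range (k+1))
        (f := fun i => t^i) (g := fun _ => t^(k+2))
        ⟨0, Finset.mem_range.2 (Nat.succ_pos k)⟩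
        (fun i hi => pow_lt_pow_right₀ h1
          (lt_trans (Finset.mem_range.1 hi) (Nat.lt_succ_self _)))
      simpa [Finset.sum_const, Finset.card_range, nsmul_eq_mul] using this
    have hbr : 0 < ((k:ℝ)+1) * t^(k+2) + ((k:ℝ)+1) * t^(k+1)
        - 2 * ∑ i ∈ Finset.range (k+1), t^i := by linarith
    exact absurd key (ne_of_gt (mul_pos (by linarith) hbr))


theorem stmt_19 (N : ℕ) (hN : 5 ≤ N) (a b A : ℝ) (ha : 0 < a) (hb : 0 < b) (hA : 0 < A)
    (hthr : (((N : ℝ) - 4) * b * A / 2) ^ ((2 : ℝ) / ((N : ℝ) - 2)) *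
      (((N : ℝ) - 2) / ((N : ℝ) - 4)) * a ^ (((N : ℝ) - 4) / ((N : ℝ) - 2)) = 1)
    (s₀ : ℝ) (hs₀ : s₀ = (((N : ℝ) - 4) * b * A / (2 * a)) ^ ((1 : ℝ) / ((N : ℝ) - 2))) :
    (0 < s₀) ∧ a * s₀ ^ 2 + b * A * s₀ ^ ((4 : ℤ) - N) = 1 ∧
      (∀ s : ℝ, 0 < s → a * s ^ 2 + b * A * s ^ ((4 : ℤ) - N) = 1 → s = s₀) ∧
      2 * a * s₀ = ((N : ℝ) - 4) * b * A * s₀ ^ ((3 : ℤ) - N) := by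
  obtain ⟨k, rfl⟩ : ∃ k, N = k + 5 := ⟨N - 5, by omega⟩
  have hk1 : ((k:ℝ) + 1) ≠ 0 := by positivity
  have hk3 : ((k:ℝ) + 3) ≠ 0 := by positivity
  have hcast4 : ((k + 5 : ℕ) : ℝ) - 4 = (k:ℝ) + 1 := by push_cast; ring
  have hcast2 : ((k + 5 : ℕ) : ℝ) - 2 = (k:ℝ) + 3 := by push_cast; ring
  rw [hcast4, hcast2] at hthr hs₀
  rw [hcast4]
  have hc : (0:ℝ) < ((k:ℝ)+1) * b * A / (2*a) := by positivity
  have hs₀pos : 0 < s₀ := hs₀ ▸ Real.rpow_pos_of_pos hc _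
  have hs₀ne : s₀ ≠ 0 := ne_of_gt hs₀pos
  have hkey : s₀ ^ (k+3) = ((k:ℝ)+1) * b * A / (2*a) := by
    rw [hs₀, ← Real.rpow_natCast (_ ^ _) (k+3), ← Real.rpow_mul hc.le]
    rw [show (1:ℝ)/((k:ℝ)+3) * ((k+3:ℕ):ℝ) = 1 by push_cast; field_simp]
    exact Real.rpow_one _
  have hbA' : ((k:ℝ)+1) * (b*A) = 2*a*s₀^(k+3) := by
    field_simp at hkey
    linear_combination -hkey
  have hs₀sq : s₀ ^ (2:ℕ) = (((k:ℝ)+1) * b * A / (2*a)) ^ ((2:ℝ)/((k:ℝ)+3)) := by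
    rw [hs₀, ← Real.rpow_natCast (_ ^ _) 2, ← Real.rpow_mul hc.le]
    norm_num
    rw [show ((k:ℝ)+3)⁻¹ * 2 = 2/((k:ℝ)+3) by ring]
  have hac : ((k:ℝ)+1) * b * A / 2 = a * (((k:ℝ)+1) * b * A / (2*a)) := by
    field_simp
  have hthr' : a * s₀ ^ 2 * (((k:ℝ)+3)/((k:ℝ)+1)) = 1 := by
    rw [hac, Real.mul_rpow ha.le hc.le, ← hs₀sq] at hthr
    have haa : a ^ ((2:ℝ)/((k:ℝ)+3)) * a ^ (((k:ℝ)+1)/((k:ℝ)+3)) = a := by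
      rw [← Real.rpow_add ha]
      rw [show (2:ℝ)/((k:ℝ)+3) + ((k:ℝ)+1)/((k:ℝ)+3) = 1 by field_simp; ring]
      exact Real.rpow_one a
    linear_combination hthr - s₀^2 * (((k:ℝ)+3)/((k:ℝ)+1)) * haa
  have hval1' : a * s₀ ^ 2 * ((k:ℝ)+3) = (k:ℝ)+1 := by
    field_simp at hthr'
    linear_combination hthr'
  have hzpow : ∀ s : ℝ, s ^ ((4:ℤ) - ((k+5:ℕ):ℤ)) = (s ^ (k+1))⁻¹ := by
    intro s
    rw [show (4:ℤ) - ((k+5:ℕ):ℤ) = -((k+1:ℕ):ℤ) by push_cast; ring, zpow_neg, zpow_natCast]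
  have hzpow3 : s₀ ^ ((3:ℤ) - ((k+5:ℕ):ℤ)) = (s₀ ^ (k+2))⁻¹ := by
    rw [show (3:ℤ) - ((k+5:ℕ):ℤ) = -((k+2:ℕ):ℤ) by push_cast; ring, zpow_neg, zpow_natCast]
  have hnum : a * s₀ ^ 2 * s₀ ^ (k+1) + b * A = s₀ ^ (k+1) := by
    have h' : (a * s₀ ^ 2 * s₀ ^ (k+1) + b * A) * (((k:ℝ)+1)*((k:ℝ)+3))
        = s₀ ^ (k+1) * (((k:ℝ)+1)*((k:ℝ)+3)) := by
      linear_combination ((k:ℝ)+3)*s₀^(k+1)*hval1' + ((k:ℝ)+3)*hbA'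
    exact mul_right_cancel₀ (mul_ne_zero hk1 hk3) h'
  have hval2'' : b * A * ((k:ℝ)+3) = 2 * s₀ ^ (k+1) := by
    have h' : (b * A * ((k:ℝ)+3)) * ((k:ℝ)+1) = (2 * s₀ ^ (k+1)) * ((k:ℝ)+1) := by
      linear_combination ((k:ℝ)+3)*hbA' + 2*s₀^(k+1)*hval1'
    exact mul_right_cancel₀ hk1 h'
  have heqn : a * s₀ ^ 2 + b * A * (s₀ ^ (k+1))⁻¹ = 1 := by
    field_simp
    linear_combination hnum
  refine ⟨hs₀pos, ?_, ?_, ?_⟩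
  · rw [hzpow]; exact heqn
  · intro s hs hseq
    have hsne : s ≠ 0 := ne_of_gt hs
    rw [hzpow] at hseq
    have hclear : a * s ^ (k+3) + b * A = s ^ (k+1) := by
      field_simp at hseq
      linear_combination hseq
    have hident : ((k:ℝ)+1)*s^(k+3) + 2*s₀^(k+3) = ((k:ℝ)+3)*s^(k+1)*s₀^2 := by
      linear_combination (-(s^(k+3)))*hval1' + (-(s₀^2))*hval2'' + ((k:ℝ)+3)*s₀^2*hclear
    have ht : s / s₀ = 1 := by
      apply aux_one k _ (div_pos hs hs₀pos)
      rw [div_pow, div_pow]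
      field_simp
      linear_combination s₀^(k+1) * hident
    field_simp at ht
    exact ht
  · rw [hzpow3, inv_eq_one_div, ← mul_div_assoc, eq_div_iff (pow_ne_zero _ hs₀ne)]
    linear_combination -hbA'
end
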